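/- If the lead times are deterministic, i.e. L_t = ℓ almost surely for a fixed natural number ℓ (so μ_L = ℓ and σ_L² = 0), and σ_D² > 0, then the bullwhip effect measure equals Var(q_t)/Var(D_t) = 2ℓ²/n² + 2ℓ/n + 1 for every t ∈ ℤ, recovering the formula of Chen et al. -/

import Mathlib

open MeasureTheory ProbabilityTheory Filter

lemma my_variance_congr {Ω : Type*} [MeasurableSpace Ω] {μ : Measure Ω} {X Y : Ω → ℝ}
    (h : X =ᵐ[μ] Y) : variance X μ = variance Y μ := by
  unfold ProbabilityTheory.variance ProbabilityTheory.evariance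
  congr 1
  have hm : (∫ ω, X ω ∂μ) = ∫ ω, Y ω ∂μ := integral_congr_ae h
  apply lintegral_congr_ae
  filter_upwards [h] with ω hω
  rw [hω, hm]

lemma my_telescope (g : ℤ → ℝ) (t : ℤ) (n : ℕ) :
    (∑ i ∈ Finset.Icc 1 n, g (t - i)) - (∑ i ∈ Finset.Icc 1 n, g (t - 1 - i))
      = g (t - 1) - g (t - 1 - n) := by
  induction n with
  | zero => simp
  | succ k ih =>
    rw [Finset.sum_Icc_succ_top (by omega), Finset.sum_Icc_succ_top (by omega)]
    have h1 : t - ((k : ℤ) + 1) = t - 1 - k := by ring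
    push_cast
    rw [h1]
    have h2 : t - 1 - ((k : ℤ) + 1) = t - 1 - (k + 1) := by push_cast; ring
    rw [h2] at *
    linarith [ih]

/-- If the lead times are deterministic, i.e. `L_t = ℓ` almost surely
for a fixed natural number `ℓ`, and `σ_D² > 0`, then the bullwhip effect measure equals
`Var(q_t)/Var(D_t) = 2ℓ²/n² + 2ℓ/n + 1`, recovering the formula of Chen et al. -/
theorem bullwhip_measure_deterministic_leadTime
    {Ω : Type*} [MeasurableSpace Ω] (P : Measure Ω) [IsProbabilityMeasure P]
    (D : ℤ → Ω → ℝ) (L : ℤ → Ω → ℕ) (ℓ : ℕ)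
    (μD σD2 : ℝ)
    (hDmeas : ∀ t, Measurable (D t))
    (hLmeas : ∀ t, Measurable (L t))
    (hD2 : ∀ t, MemLp (D t) 2 P)
    (hDid : ∀ s t, IdentDistrib (D s) (D t) P P)
    (hLconst : ∀ t, ∀ᵐ ω ∂P, L t ω = ℓ)
    (hIndep : iIndepFun (β := fun i : ℤ ⊕ ℤ => match i with
        | Sum.inl _ => ℝ
        | Sum.inr _ => ℕ)
      (m := fun i => match i with
        | Sum.inl _ => (inferInstance : MeasurableSpace ℝ)
        | Sum.inr _ => (inferInstance : MeasurableSpace ℕ))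
      (fun i => match i with
        | Sum.inl t => D t
        | Sum.inr t => L t) P)
    (hμD : ∀ t, ∫ ω, D t ω ∂P = μD)
    (hσD : ∀ t, variance (D t) P = σD2)
    (n m : ℕ) (hn : 1 ≤ n) (hm : 1 ≤ m)
    (hσD2pos : 0 < σD2) :
    ∀ t : ℤ, variance (fun ω => ((((m : ℝ)⁻¹ * ∑ i ∈ Finset.Icc 1 m, (L (t - i) ω : ℝ)) * ((n : ℝ)⁻¹ * ∑ i ∈ Finset.Icc 1 n, D (t - i) ω)) - (((m : ℝ)⁻¹ * ∑ i ∈ Finset.Icc 1 m, (L ((t - 1) - i) ω : ℝ)) * ((n : ℝ)⁻¹ * ∑ i ∈ Finset.Icc 1 n, D ((t - 1) - i) ω)) + D (t - 1) ω)) P / variance (D t) P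
      = 2 * (ℓ : ℝ) ^ 2 / (n : ℝ) ^ 2 + 2 * (ℓ : ℝ) / (n : ℝ) + 1 := by
  intro t
  have hn0 : (n : ℝ) ≠ 0 := by positivity
  have hm0 : (m : ℝ) ≠ 0 := by positivity
  set a : ℝ := 1 + (ℓ : ℝ) / n with ha
  set b : ℝ := -((ℓ : ℝ) / n) with hb
  have hL : ∀ᵐ ω ∂P, ∀ s : ℤ, L s ω = ℓ := ae_all_iff.2 hLconst
  have hcongr : (fun ω => ((((m : ℝ)⁻¹ * ∑ i ∈ Finset.Icc 1 m, (L (t - i) ω : ℝ)) * ((n : ℝ)⁻¹ * ∑ i ∈ Finset.Icc 1 n, D (t - i) ω)) - (((m : ℝ)⁻¹ * ∑ i ∈ Finset.Icc 1 m, (L ((t - 1) - i) ω : ℝ)) * ((n : ℝ)⁻¹ * ∑ i ∈ Finset.Icc 1 n, D ((t - 1) - i) ω)) + D (t - 1) ω))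
      =ᵐ[P] fun ω => a * D (t - 1) ω + b * D (t - 1 - n) ω := by
    filter_upwards [hL] with ω hω
    have hs1 : ∑ i ∈ Finset.Icc 1 m, ((L (t - i) ω : ℝ)) = m * ℓ := by
      rw [Finset.sum_congr rfl (fun i _ => by rw [hω (t - i)])]
      simp [Nat.card_Icc, mul_comm]
    have hs2 : ∑ i ∈ Finset.Icc 1 m, ((L ((t - 1) - i) ω : ℝ)) = m * ℓ := by
      rw [Finset.sum_congr rfl (fun i _ => by rw [hω ((t - 1) - i)])]
      simp [Nat.card_Icc, mul_comm]
    rw [hs1, hs2, inv_mul_cancel_left₀ hm0]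
    have htel := my_telescope (fun s => D s ω) t n
    have : ((ℓ : ℝ)) * ((n : ℝ)⁻¹ * ∑ i ∈ Finset.Icc 1 n, D (t - i) ω)
        - ((ℓ : ℝ)) * ((n : ℝ)⁻¹ * ∑ i ∈ Finset.Icc 1 n, D ((t - 1) - i) ω)
        = (ℓ : ℝ) / n * (D (t - 1) ω - D (t - 1 - n) ω) := by
      rw [← htel]; field_simp
    rw [ha, hb]
    linarith [this]
  rw [my_variance_congr hcongr, hσD t]
  -- independence of the two demand terms
  have hne : (t - 1 : ℤ) ≠ t - 1 - n := by
    intro h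
    have : (n : ℤ) = 0 := by omega
    omega
  have hind : IndepFun (D (t - 1)) (D (t - 1 - n)) P := by
    have := hIndep.indepFun (i := Sum.inl (t - 1)) (j := Sum.inl (t - 1 - n))
      (by simpa using hne)
    exact this
  have hind2 : IndepFun (fun ω => a * D (t - 1) ω) (fun ω => b * D (t - 1 - n) ω) P := by
    exact hind.comp (measurable_const_mul a) (measurable_const_mul b)
  have hX : MemLp (fun ω => a * D (t - 1) ω) 2 P := (hD2 (t - 1)).const_mul a
  have hY : MemLp (fun ω => b * D (t - 1 - n) ω) 2 P := (hD2 (t - 1 - n)).const_mul b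
  have hvadd : variance (fun ω => a * D (t - 1) ω + b * D (t - 1 - n) ω) P
      = variance (fun ω => a * D (t - 1) ω) P + variance (fun ω => b * D (t - 1 - n) ω) P := by
    exact hind2.variance_add hX hY
  rw [hvadd, variance_const_mul, variance_const_mul, hσD, hσD]
  rw [ha, hb]
  field_simp
  ring
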